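/- arXiv:2601.16194 — 3 statements merged into one kernel-verified Lean document; each statement's English description precedes it below -/
import Mathlib

section
/- If two labels L1 and L2 end at the same node, belong to the same day, and L1 is componentwise at most L2 in accumulated time, reduced cost, daily working time, daily driving distance, and compartment loads, with visited-client sets and compartment-client sets of L1 contained in those of L2, then for every feasible extension sequence of L2 to a complete route, applying the same extension sequence to L1 is also feasible and yields a route with reduced cost at most that obtained from L2 (validity of the same-day dominance rule). -/
open scoped BigOperators

/-- A label of the labeling algorithm: current node, accumulated time, accumulated
reduced cost, day, set of visited clients, compartment loads, compartment client
sets, daily working time and daily driving distance. -/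
structure Label (V C : Type) where
  node : V
  t : ℝ
  cbar : ℝ
  day : ℕ
  S : Set V
  load : C → ℝ
  O : C → Set V
  g : ℝ
  o : ℝ

/-- Problem data: travel times, service times, arc reduced costs, time-window
bounds, distances, demands, compartment capacities, total capacity, daily working
time limit T, daily driving limit Dist, and break duration B. -/
structure Params (V C : Type) where
  tt : V → V → ℝ
  u : V → ℝ
  rc : V → V → ℝ
  ws : V → ℝ
  we : V → ℝ
  dst : V → V → ℝ
  Q : V → ℝ
  cap : C → ℝ
  Ltot : ℝ
  T : ℝ
  DistMax : ℝ
  B : ℝ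

/-- Resource extension along an arc to node `st.1`, with compartment choice
`st.2.1` and break indicator `st.2.2`. -/
def extendLabel {V C : Type} [DecidableEq C] (P : Params V C) (L : Label V C)
    (st : V × C × Bool) : Label V C :=
  { node := st.1
    t := max (L.t + P.tt L.node st.1 + P.u L.node + (if st.2.2 then P.B else 0)) (P.ws st.1)
    cbar := L.cbar + P.rc L.node st.1
    day := L.day + (if st.2.2 then 1 else 0)
    S := L.S ∪ {st.1}
    load := Function.update L.load st.2.1 (L.load st.2.1 + P.Q st.1)
    O := Function.update L.O st.2.1 (L.O st.2.1 ∪ {st.1})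
    g := if st.2.2 then 0 else L.g + P.tt L.node st.1 + P.u L.node
    o := if st.2.2 then 0 else L.o + P.dst L.node st.1 }

/-- Feasibility of a single extension: time-window upper bound, compartment and
total capacities, elementarity, and daily working-time and driving limits. -/
def feasStep {V C : Type} [DecidableEq C] [Fintype C] (P : Params V C)
    (L : Label V C) (st : V × C × Bool) : Prop :=
  (extendLabel P L st).t ≤ P.we st.1 ∧
  (∀ m, (extendLabel P L st).load m ≤ P.cap m) ∧
  (∑ m, (extendLabel P L st).load m) ≤ P.Ltot ∧
  st.1 ∉ L.S ∧
  (extendLabel P L st).g ≤ P.T ∧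
  (extendLabel P L st).o ≤ P.DistMax

/-- Feasibility of a sequence of extensions. -/
def feasSeq {V C : Type} [DecidableEq C] [Fintype C] (P : Params V C) :
    Label V C → List (V × C × Bool) → Prop
  | _, [] => True
  | L, st :: rest => feasStep P L st ∧ feasSeq P (extendLabel P L st) rest

/-- The label obtained after applying a sequence of extensions. -/
def applySeq {V C : Type} [DecidableEq C] (P : Params V C) (L : Label V C)
    (steps : List (V × C × Bool)) : Label V C :=
  steps.foldl (extendLabel P) L

/-- Same-day dominance of `L1` over `L2`. -/
def SameDayDom {V C : Type} (L1 L2 : Label V C) : Prop :=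
  L1.node = L2.node ∧ L1.day = L2.day ∧ L1.t ≤ L2.t ∧ L1.cbar ≤ L2.cbar ∧
  L1.g ≤ L2.g ∧ L1.o ≤ L2.o ∧ L1.S ⊆ L2.S ∧
  (∀ m, L1.load m ≤ L2.load m) ∧ (∀ m, L1.O m ⊆ L2.O m)

/-- Inter-day dominance of `L1` over `L2` with break duration `B`. -/
def InterDayDom {V C : Type} (B : ℝ) (L1 L2 : Label V C) : Prop :=
  L1.node = L2.node ∧ L1.t ≤ L2.t - B ∧ L1.cbar ≤ L2.cbar ∧ L1.day < L2.day ∧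
  L1.S ⊆ L2.S ∧ (∀ m, L1.load m ≤ L2.load m) ∧ (∀ m, L1.O m ⊆ L2.O m)


lemma dom_step {V C : Type} [DecidableEq C] [Fintype C]
    (P : Params V C) (L1 L2 : Label V C) (hdom : SameDayDom L1 L2)
    (st : V × C × Bool) (hf : feasStep P L2 st) :
    feasStep P L1 st ∧ SameDayDom (extendLabel P L1 st) (extendLabel P L2 st) := by
  obtain ⟨hn, hd, ht, hc, hg, ho, hS, hl, hO⟩ := hdom
  obtain ⟨f1, f2, f3, f4, f5, f6⟩ := hf
  have htt : (extendLabel P L1 st).t ≤ (extendLabel P L2 st).t := by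
    simp only [extendLabel, hn]
    exact max_le_max (by linarith) le_rfl
  have hll : ∀ m, (extendLabel P L1 st).load m ≤ (extendLabel P L2 st).load m := by
    intro m
    simp only [extendLabel, Function.update_apply]
    split <;> [exact add_le_add (hl st.2.1) le_rfl; exact hl m]
  have hgg : (extendLabel P L1 st).g ≤ (extendLabel P L2 st).g := by
    simp only [extendLabel, hn]; split <;> [rfl; linarith]
  have hoo : (extendLabel P L1 st).o ≤ (extendLabel P L2 st).o := by
    simp only [extendLabel, hn]; split <;> [rfl; linarith]
  refine ⟨⟨le_trans htt f1, fun m => le_trans (hll m) (f2 m), ?_,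
      fun h => f4 (hS h), le_trans hgg f5, le_trans hoo f6⟩,
    rfl, by simp [extendLabel, hd], htt, by simp [extendLabel, hn, hc], hgg, hoo,
    Set.union_subset_union hS le_rfl, hll, ?_⟩
  · exact le_trans (Finset.sum_le_sum fun m _ => hll m) f3
  · intro m
    simp only [extendLabel, Function.update_apply]
    split <;> [exact Set.union_subset_union (hO st.2.1) le_rfl; exact hO m]

/-- Validity of the same-day dominance rule: if `L1` same-day
dominates `L2`, then every feasible extension sequence of `L2` to a complete
route (ending at the sink `δ`) is also feasible from `L1` and yields a route
with reduced cost at most that obtained from `L2`. -/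
theorem same_day_dominance_valid {V C : Type} [DecidableEq C] [Fintype C]
    (P : Params V C) (δ : V) (L1 L2 : Label V C) (hdom : SameDayDom L1 L2) :
    ∀ steps : List (V × C × Bool),
      (applySeq P L2 steps).node = δ → feasSeq P L2 steps →
      feasSeq P L1 steps ∧
        (applySeq P L1 steps).cbar ≤ (applySeq P L2 steps).cbar := by
  intro steps
  induction steps generalizing L1 L2 with
  | nil => exact fun _ _ => ⟨trivial, hdom.2.2.2.1⟩
  | cons st rest ih =>
    intro hδ hf
    obtain ⟨h1, h2⟩ := hf
    obtain ⟨hs, hd⟩ := dom_step P L1 L2 hdom st h1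
    obtain ⟨hf2, hc⟩ := ih _ _ hd hδ h2
    exact ⟨⟨hs, hf2⟩, hc⟩
end

section
/- Validity of the inter-day dominance rule: if labels L1 and L2 end at the same node with t(L1) ≤ t(L2) − B, c̄(L1) ≤ c̄(L2), d(L1) < d(L2), S(L1) ⊆ S(L2), l_m(L1) ≤ l_m(L2) and O_m(L1) ⊆ O_m(L2) for all compartments m, then for any feasible extension of L2 along an arc (i,j) without a break, the extension of L1 along (i,j) taken with an immediate break of duration B is feasible, arrives no later, has reduced cost no larger, and has daily working time and driving distance resources equal to their post-break values (hence at most those of L2's extension). -/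
open scoped BigOperators

/-- Validity of the inter-day dominance rule: under the inter-day
dominance conditions, any feasible no-break extension of `L2` along an arc can be
matched by the same extension of `L1` taken with an immediate break: it is
feasible, arrives no later, has reduced cost no larger, and its daily working
time and driving distance equal their post-break values 0 (hence at most those
of `L2`'s extension). -/
theorem inter_day_dominance_valid {V C : Type} [DecidableEq C] [Fintype C]
    (P : Params V C) (hB : 0 < P.B) (hT : 0 ≤ P.T) (hD : 0 ≤ P.DistMax)
    (L1 L2 : Label V C) (j : V) (m : C)
    (hnode : L1.node = L2.node)
    (ht : L1.t ≤ L2.t - P.B) (hc : L1.cbar ≤ L2.cbar) (hday : L1.day < L2.day)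
    (hS : L1.S ⊆ L2.S)
    (hload : ∀ m', L1.load m' ≤ L2.load m')
    (hO : ∀ m', L1.O m' ⊆ L2.O m')
    (hg2 : 0 ≤ (extendLabel P L2 (j, m, false)).g)
    (ho2 : 0 ≤ (extendLabel P L2 (j, m, false)).o)
    (hfeas : feasStep P L2 (j, m, false)) :
    feasStep P L1 (j, m, true) ∧
    (extendLabel P L1 (j, m, true)).t ≤ (extendLabel P L2 (j, m, false)).t ∧
    (extendLabel P L1 (j, m, true)).cbar ≤ (extendLabel P L2 (j, m, false)).cbar ∧
    (extendLabel P L1 (j, m, true)).g = 0 ∧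
    (extendLabel P L1 (j, m, true)).o = 0 ∧
    (extendLabel P L1 (j, m, true)).g ≤ (extendLabel P L2 (j, m, false)).g ∧
    (extendLabel P L1 (j, m, true)).o ≤ (extendLabel P L2 (j, m, false)).o := by
  obtain ⟨hwe, hcap, htot, hnotS, hgT, hoD⟩ := hfeas
  have ht' : L1.t + P.B ≤ L2.t := by linarith
  have httle : max (L1.t + P.tt L1.node j + P.u L1.node + (if true then P.B else 0)) (P.ws j)
      ≤ max (L2.t + P.tt L2.node j + P.u L2.node + (if false then P.B else 0)) (P.ws j) := by
    simp only [if_true, Bool.false_eq_true, if_false, hnode]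
    exact max_le_max (by linarith) le_rfl
  have hload' : ∀ m', (extendLabel P L1 (j, m, true)).load m' ≤ (extendLabel P L2 (j, m, false)).load m' := by
    intro m'
    simp only [extendLabel, Function.update]
    by_cases h : m' = m <;> simp [h] <;> [linarith [hload m]; exact hload m']
  refine ⟨⟨?_, ?_, ?_, ?_, ?_, ?_⟩, ?_, ?_, ?_, ?_, ?_, ?_⟩
  · exact le_trans httle hwe
  · intro m'; exact le_trans (hload' m') (hcap m')
  · exact le_trans (Finset.sum_le_sum fun m' _ => hload' m') htot
  · exact fun h => hnotS (hS h)
  · simpa [extendLabel] using hT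
  · simpa [extendLabel] using hD
  · exact httle
  · simp only [extendLabel, hnode]; linarith
  · simp [extendLabel]
  · simp [extendLabel]
  · simpa [extendLabel] using hg2
  · simpa [extendLabel] using ho2
end

section
/- If travel times satisfy the triangle inequality and a partial path's label L1 same-day dominates label L2 with strict inequality in reduced cost, then L2 cannot be the prefix of any route that is uniquely optimal among routes in the full route set: for any completion of L2 into a feasible route, the same completion applied to L1 yields a feasible route with strictly smaller reduced cost. -/
open scoped BigOperators

lemma dom_extend {V C : Type} [DecidableEq C] (P : Params V C) {L1 L2 : Label V C}
    (h : SameDayDom L1 L2) (st : V × C × Bool) :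
    SameDayDom (extendLabel P L1 st) (extendLabel P L2 st) := by
  obtain ⟨hn, hd, ht, hc, hg, ho, hS, hl, hO⟩ := h
  refine ⟨rfl, ?_, ?_, ?_, ?_, ?_, ?_, ?_, ?_⟩
  · simp [extendLabel, hd]
  · simp only [extendLabel]; rw [hn]; exact max_le_max (by linarith) le_rfl
  · simp only [extendLabel]; rw [hn]; linarith
  · simp only [extendLabel]
    rcases st.2.2 with _ | _
    · simp only [if_neg Bool.false_ne_true]; rw [hn]; linarith
    · simp
  · simp only [extendLabel]
    rcases st.2.2 with _ | _
    · simp only [if_neg Bool.false_ne_true]; rw [hn]; linarith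
    · simp
  · exact Set.union_subset_union hS subset_rfl
  · intro m
    simp only [extendLabel, Function.update_apply]
    split
    · linarith [hl st.2.1]
    · exact hl m
  · intro m
    simp only [extendLabel, Function.update_apply]
    split
    · exact Set.union_subset_union (hO st.2.1) subset_rfl
    · exact hO m

lemma feas_mono {V C : Type} [DecidableEq C] [Fintype C] (P : Params V C)
    {L1 L2 : Label V C} (h : SameDayDom L1 L2) {st : V × C × Bool}
    (hf : feasStep P L2 st) : feasStep P L1 st := by
  have hd := dom_extend P h st
  obtain ⟨_, _, ht, _, hg, ho, _, hl, _⟩ := hd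
  obtain ⟨f1, f2, f3, f4, f5, f6⟩ := hf
  refine ⟨le_trans ht f1, fun m => le_trans (hl m) (f2 m), ?_,
    fun hx => f4 (h.2.2.2.2.2.2.1 hx), le_trans hg f5, le_trans ho f6⟩
  calc (∑ m, (extendLabel P L1 st).load m) ≤ ∑ m, (extendLabel P L2 st).load m :=
        Finset.sum_le_sum (fun m _ => hl m)
    _ ≤ P.Ltot := f3

/-- If `L1` same-day dominates `L2` with strict inequality in
reduced cost, then any completion of `L2` into a feasible route ending at the
sink `δ` applied to `L1` is also feasible and yields a route with strictly
smaller reduced cost, so `L2` cannot be the prefix of a uniquely optimal route. -/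
theorem strict_dominance_excludes_optimal_prefix {V C : Type} [DecidableEq C]
    [Fintype C] (P : Params V C) (δ : V) (L1 L2 : Label V C)
    (hdom : SameDayDom L1 L2) (hstrict : L1.cbar < L2.cbar) :
    ∀ steps : List (V × C × Bool),
      (applySeq P L2 steps).node = δ → feasSeq P L2 steps →
      feasSeq P L1 steps ∧
        (applySeq P L1 steps).cbar < (applySeq P L2 steps).cbar := by
  intro steps hsink hfeas
  clear hsink
  induction steps generalizing L1 L2 with
  | nil => exact ⟨trivial, hstrict⟩
  | cons st rest ih =>
    obtain ⟨hstep, hrest⟩ := hfeas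
    have hd := dom_extend P hdom st
    have hs : (extendLabel P L1 st).cbar < (extendLabel P L2 st).cbar := by
      simp only [extendLabel]
      rw [hdom.1]
      linarith
    obtain ⟨ha, hb⟩ := ih _ _ hd hs hrest
    exact ⟨⟨feas_mono P hdom hstep, ha⟩, hb⟩
end
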